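/- Let G be a subgraph of the complete bipartite graph K_{8,16} with parts X of size 8 and Y of size 16 such that G contains no K_{2,2}, G has exactly 38 edges, and every vertex of X has degree at least 4 in G. If there exist two vertices x, x' of X, each of degree exactly 4, whose neighborhoods in Y intersect in exactly one vertex, then the bipartite complement of G contains K_{4,4}. -/

import Mathlib

/-- `G` (an edge set of a subgraph of `K_{m,n}`) contains `K_{s,t}`:
there are an `s`-subset `A` of the `X`-side and a `t`-subset `B` of the `Y`-side
with every pair in `A × B` an edge. -/
def ContainsK (m n s t : ℕ) (G : Finset (Fin m × Fin n)) : Prop :=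
  ∃ A : Finset (Fin m), ∃ B : Finset (Fin n),
    A.card = s ∧ B.card = t ∧ ∀ x ∈ A, ∀ y ∈ B, (x, y) ∈ G

/-- The bipartite complement of a subgraph of `K_{m,n}`. -/
def bipCompl (m n : ℕ) (G : Finset (Fin m × Fin n)) : Finset (Fin m × Fin n) :=
  Finset.univ \ G

/-- The neighborhood in `Y` of a vertex `x` of the `X`-side. -/
def nbhd (m n : ℕ) (G : Finset (Fin m × Fin n)) (x : Fin m) : Finset (Fin n) :=
  Finset.univ.filter (fun y => (x, y) ∈ G)

/-- The degree of a vertex `x` of the `X`-side. -/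
def degX (m n : ℕ) (G : Finset (Fin m × Fin n)) (x : Fin m) : ℕ :=
  (nbhd m n G x).card

open Finset

/-- If G is a K_{2,2}-free subgraph of K_{8,16} with exactly 38 edges, minimum
X-degree at least 4, and there are two vertices of X of degree exactly 4 whose
neighborhoods meet in exactly one vertex, then the complement of G contains K_{4,4}. -/
theorem two_deg4_common_nbr (G : Finset (Fin 8 × Fin 16))
    (hfree : ¬ ContainsK 8 16 2 2 G)
    (hcard : G.card = 38)
    (hmin : ∀ x : Fin 8, 4 ≤ degX 8 16 G x)
    (x x' : Fin 8) (hne : x ≠ x')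
    (hx : degX 8 16 G x = 4) (hx' : degX 8 16 G x' = 4)
    (hint : (nbhd 8 16 G x ∩ nbhd 8 16 G x').card = 1) :
    ContainsK 8 16 4 4 (bipCompl 8 16 G) := by
  classical
  set N : Fin 8 → Finset (Fin 16) := nbhd 8 16 G with hN
  -- K_{2,2}-freeness: any two distinct X-vertices have at most one common neighbour
  have hcom : ∀ u v : Fin 8, u ≠ v → (N u ∩ N v).card ≤ 1 := by
    intro u v huv
    by_contra h
    push_neg at h
    obtain ⟨B, hBsub, hB⟩ := Finset.exists_subset_card_eq (n := 2) h
    refine hfree ⟨{u, v}, B, ?_, hB, ?_⟩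
    · rw [card_insert_of_notMem (by simp [huv]), card_singleton]
    · intro w hw y hy
      have hy' := hBsub hy
      simp only [mem_inter, hN, nbhd, mem_filter, mem_univ, true_and] at hy'
      rcases mem_insert.mp hw with rfl | hw
      · exact hy'.1
      · rw [mem_singleton.mp hw]; exact hy'.2
  -- S : the 9 vertices of Y outside N x ∪ N x'
  set S : Finset (Fin 16) := (N x ∪ N x')ᶜ with hSdef
  have hS9 : S.card = 9 := by
    have h7 : (N x ∪ N x').card + (N x ∩ N x').card = (N x).card + (N x').card :=
      card_union_add_card_inter _ _
    have hxc : (N x).card = 4 := hx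
    have hxc' : (N x').card = 4 := hx'
    have h7u : (N x ∪ N x').card = 7 := by omega
    rw [hSdef, card_compl, h7u]
    rfl
  -- U : the other six X-vertices
  set U : Finset (Fin 8) := ({x, x'} : Finset (Fin 8))ᶜ with hUdef
  have hU6 : U.card = 6 := by
    rw [hUdef, card_compl, card_insert_of_notMem (by simp [hne]), card_singleton]
    rfl
  set a : Fin 8 → ℕ := fun u => (N u ∩ S).card with ha
  set c : Fin 8 → Fin 8 → ℕ := fun u v => (N u ∩ N v ∩ S).card with hc
  -- the key existence claim
  have key : ∃ u ∈ U, ∃ v ∈ U, u ≠ v ∧ 4 ≤ (S \ (N u ∪ N v)).card := by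
    by_contra hbad
    push_neg at hbad
    -- per-pair inequality
    have hpair : ∀ u ∈ U, ∀ v ∈ U, u ≠ v → 6 + c u v ≤ a u + a v := by
      intro u hu v hv huv
      have h1 : (S \ (N u ∪ N v)).card + (S ∩ (N u ∪ N v)).card = S.card :=
        card_sdiff_add_card_inter _ _
      have h2 : (S \ (N u ∪ N v)).card ≤ 3 :=
        Nat.lt_succ_iff.mp (hbad u hu v hv huv)
      have h3 : ((N u ∩ S) ∪ (N v ∩ S)).card + ((N u ∩ S) ∩ (N v ∩ S)).card
          = a u + a v := card_union_add_card_inter _ _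
      have e1 : (N u ∩ S) ∪ (N v ∩ S) = S ∩ (N u ∪ N v) := by
        ext y; simp only [mem_inter, mem_union]; tauto
      have e2 : (N u ∩ S) ∩ (N v ∩ S) = N u ∩ N v ∩ S := by
        ext y; simp only [mem_inter]; tauto
      rw [e1, e2] at h3
      have h4 : 6 ≤ (S ∩ (N u ∪ N v)).card := by omega
      simp only [hc]
      omega
    have hc1 : ∀ u v : Fin 8, u ≠ v → c u v ≤ 1 := by
      intro u v huv
      exact le_trans (card_le_card (inter_subset_left)) (hcom u v huv)
    -- indicator function
    set f : Fin 8 → Fin 16 → ℕ := fun u y => if (u, y) ∈ G then 1 else 0 with hf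
    set e : Fin 16 → ℕ := fun y => ∑ u ∈ U, f u y with he
    -- a as a sum over S
    have haf : ∀ u : Fin 8, a u = ∑ y ∈ S, f u y := by
      intro u
      have : N u ∩ S = S.filter (fun y => (u, y) ∈ G) := by
        ext y; simp [hN, nbhd, mem_inter, mem_filter, and_comm]
      rw [ha]
      simp only [this, card_filter]
      rfl
    have hcf : ∀ u v : Fin 8, c u v = ∑ y ∈ S, f u y * f v y := by
      intro u v
      have hset : N u ∩ N v ∩ S = S.filter (fun y => (u, y) ∈ G ∧ (v, y) ∈ G) := by
        ext y; simp [hN, nbhd, mem_inter, mem_filter]; tauto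
      rw [hc]
      simp only [hset, card_filter]
      refine Finset.sum_congr rfl fun y _ => ?_
      by_cases h1 : (u, y) ∈ G <;> by_cases h2 : (v, y) ∈ G <;> simp [hf, h1, h2]
    set T : ℕ := ∑ u ∈ U, a u with hT
    have hTe : T = ∑ y ∈ S, e y := by
      rw [hT]
      simp only [haf, he]
      exact Finset.sum_comm
    set Q : ℕ := ∑ u ∈ U, ∑ v ∈ U.erase u, c u v with hQ
    -- Q as a sum over S
    have hQy : ∀ y ∈ S, (∑ u ∈ U, ∑ v ∈ U.erase u, f u y * f v y) + e y = e y * e y := by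
      intro y _
      have h1 : ∀ u ∈ U, (∑ v ∈ U.erase u, f u y * f v y) + f u y * f u y
          = f u y * e y := by
        intro u hu
        rw [← Finset.mul_sum, ← mul_add, Finset.sum_erase_add _ _ hu]
      have h2 : (∑ u ∈ U, ((∑ v ∈ U.erase u, f u y * f v y) + f u y * f u y))
          = ∑ u ∈ U, f u y * e y := Finset.sum_congr rfl h1
      rw [Finset.sum_add_distrib, ← Finset.sum_mul] at h2
      have h3 : ∀ u : Fin 8, f u y * f u y = f u y := by
        intro u; by_cases h : (u, y) ∈ G <;> simp [hf, h]
      simp only [h3] at h2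
      simp only [he]
      exact h2
    have hQS : Q = ∑ y ∈ S, ∑ u ∈ U, ∑ v ∈ U.erase u, f u y * f v y := by
      rw [hQ]
      simp only [hcf]
      rw [Finset.sum_comm]
      refine Finset.sum_congr rfl fun y _ => Finset.sum_comm
    -- bound: 4T ≤ Q + 54
    have he6 : ∀ y : Fin 16, e y ≤ 6 := by
      intro y
      calc e y = (U.filter (fun u => (u, y) ∈ G)).card := by
            rw [he, card_filter]
        _ ≤ U.card := card_filter_le _ _
        _ = 6 := hU6
    have hH2 : 4 * T ≤ Q + 54 := by
      have hper : ∀ y ∈ S, 4 * e y ≤ (∑ u ∈ U, ∑ v ∈ U.erase u, f u y * f v y) + 6 := by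
        intro y hy
        have h1 := hQy y hy
        have h2 := he6 y
        set n := e y
        set m := ∑ u ∈ U, ∑ v ∈ U.erase u, f u y * f v y
        interval_cases n <;> omega
      calc 4 * T = ∑ y ∈ S, 4 * e y := by rw [hTe, Finset.mul_sum]
        _ ≤ ∑ y ∈ S, ((∑ u ∈ U, ∑ v ∈ U.erase u, f u y * f v y) + 6) :=
            Finset.sum_le_sum hper
        _ = Q + 54 := by
            rw [Finset.sum_add_distrib, ← hQS, Finset.sum_const, hS9, smul_eq_mul]
    -- bound: Q ≤ 30
    have hcard_erase : ∀ u ∈ U, (U.erase u).card = 5 := by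
      intro u hu; rw [card_erase_of_mem hu, hU6]
    have hH3 : Q ≤ 30 := by
      calc Q ≤ ∑ u ∈ U, ∑ v ∈ U.erase u, 1 := by
            refine Finset.sum_le_sum fun u hu => Finset.sum_le_sum fun v hv => ?_
            exact hc1 u v (Ne.symm (Finset.ne_of_mem_erase hv))
        _ = 30 := by
            rw [Finset.sum_congr rfl fun u hu => by
              rw [Finset.sum_const, hcard_erase u hu, smul_eq_mul, mul_one]]
            rw [Finset.sum_const, hU6, smul_eq_mul]
    -- bound: 180 + Q ≤ 10 T
    have hsum_erase_a : ∀ u ∈ U, (∑ v ∈ U.erase u, a v) + a u = T :=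
      fun u hu => Finset.sum_erase_add _ _ hu
    have hLHS : (∑ u ∈ U, ∑ v ∈ U.erase u, (6 + c u v)) = 180 + Q := by
      have hinner : ∀ u ∈ U, (∑ v ∈ U.erase u, (6 + c u v))
          = 30 + ∑ v ∈ U.erase u, c u v := by
        intro u hu
        rw [Finset.sum_add_distrib, Finset.sum_const, hcard_erase u hu, smul_eq_mul]
      rw [Finset.sum_congr rfl hinner, Finset.sum_add_distrib, Finset.sum_const, hU6,
        smul_eq_mul, hQ]
    have hRHS : (∑ u ∈ U, ∑ v ∈ U.erase u, (a u + a v)) = 10 * T := by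
      have hinner : ∀ u ∈ U, ∑ v ∈ U.erase u, (a u + a v)
          = 5 * a u + ∑ v ∈ U.erase u, a v := by
        intro u hu
        rw [Finset.sum_add_distrib, Finset.sum_const, hcard_erase u hu, smul_eq_mul]
      rw [Finset.sum_congr rfl hinner, Finset.sum_add_distrib, ← Finset.mul_sum, ← hT]
      have hW : (∑ u ∈ U, ∑ v ∈ U.erase u, a v) + T = 6 * T := by
        calc (∑ u ∈ U, ∑ v ∈ U.erase u, a v) + T
            = ∑ u ∈ U, ((∑ v ∈ U.erase u, a v) + a u) := by
              rw [Finset.sum_add_distrib, hT]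
          _ = ∑ u ∈ U, T := Finset.sum_congr rfl hsum_erase_a
          _ = 6 * T := by rw [Finset.sum_const, hU6, smul_eq_mul]
      omega
    have hH1 : 180 + Q ≤ 10 * T := by
      rw [← hLHS, ← hRHS]
      refine Finset.sum_le_sum fun u hu => Finset.sum_le_sum fun v hv => ?_
      exact hpair u hu v (Finset.mem_of_mem_erase hv)
        (Ne.symm (Finset.ne_of_mem_erase hv))
    -- forces Q = 30, T = 21
    have hQ30 : Q = 30 := by omega
    have hT21 : T = 21 := by omega
    -- equality extraction: all c u v = 1
    have hcall : ∀ u ∈ U, ∀ v ∈ U.erase u, c u v = 1 := by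
      have houter : ∀ u ∈ U, (∑ v ∈ U.erase u, c u v) ≤ ∑ v ∈ U.erase u, 1 :=
        fun u hu => Finset.sum_le_sum fun v hv =>
          hc1 u v (Ne.symm (Finset.ne_of_mem_erase hv))
      have hsum : (∑ u ∈ U, ∑ v ∈ U.erase u, c u v) = ∑ u ∈ U, ∑ v ∈ U.erase u, 1 := by
        rw [← hQ, hQ30]
        rw [Finset.sum_congr rfl fun u hu => by
          rw [Finset.sum_const, hcard_erase u hu, smul_eq_mul, mul_one]]
        rw [Finset.sum_const, hU6, smul_eq_mul]
      have h1 := (Finset.sum_eq_sum_iff_of_le houter).mp hsum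
      intro u hu v hv
      have h2 : (∑ v ∈ U.erase u, c u v) = ∑ v ∈ U.erase u, 1 := h1 u hu
      have h3 := (Finset.sum_eq_sum_iff_of_le fun v hv =>
        hc1 u v (Ne.symm (Finset.ne_of_mem_erase hv))).mp h2
      exact h3 v hv
    -- equality extraction: all 6 + c u v = a u + a v
    have haall : ∀ u ∈ U, ∀ v ∈ U.erase u, 6 + c u v = a u + a v := by
      have houter : ∀ u ∈ U, (∑ v ∈ U.erase u, (6 + c u v))
          ≤ ∑ v ∈ U.erase u, (a u + a v) :=
        fun u hu => Finset.sum_le_sum fun v hv =>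
          hpair u hu v (Finset.mem_of_mem_erase hv) (Ne.symm (Finset.ne_of_mem_erase hv))
      have hsum : (∑ u ∈ U, ∑ v ∈ U.erase u, (6 + c u v))
          = ∑ u ∈ U, ∑ v ∈ U.erase u, (a u + a v) := by
        rw [hLHS, hRHS, hQ30, hT21]
      have h1 := (Finset.sum_eq_sum_iff_of_le houter).mp hsum
      intro u hu v hv
      have h2 := h1 u hu
      have h3 := (Finset.sum_eq_sum_iff_of_le fun v hv =>
        hpair u hu v (Finset.mem_of_mem_erase hv)
          (Ne.symm (Finset.ne_of_mem_erase hv))).mp h2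
      exact h3 v hv
    -- all pairs: a u + a v = 7
    have h7 : ∀ u ∈ U, ∀ v ∈ U, u ≠ v → a u + a v = 7 := by
      intro u hu v hv huv
      have hv' : v ∈ U.erase u := Finset.mem_erase.mpr ⟨huv.symm, hv⟩
      have := haall u hu v hv'
      have := hcall u hu v hv'
      omega
    -- three distinct elements give a contradiction
    obtain ⟨V, hVU, hV3⟩ := Finset.exists_subset_card_eq (s := U) (n := 3) (by rw [hU6]; norm_num)
    rw [Finset.card_eq_three] at hV3
    obtain ⟨p, q, r, hpq, hpr, hqr, rfl⟩ := hV3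
    have hp : p ∈ U := hVU (by simp)
    have hq : q ∈ U := hVU (by simp)
    have hr : r ∈ U := hVU (by simp)
    have e1 := h7 p hp q hq hpq
    have e2 := h7 p hp r hr hpr
    have e3 := h7 q hq r hr hqr
    omega
  -- construct the K_{4,4} in the complement
  obtain ⟨u, hu, v, hv, huv, h4⟩ := key
  obtain ⟨B, hBsub, hB4⟩ := Finset.exists_subset_card_eq (n := 4) h4
  have hux : u ≠ x ∧ u ≠ x' := by
    have := Finset.mem_compl.mp hu
    simp only [mem_insert, mem_singleton] at this
    tauto
  have hvx : v ≠ x ∧ v ≠ x' := by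
    have := Finset.mem_compl.mp hv
    simp only [mem_insert, mem_singleton] at this
    tauto
  refine ⟨{x, x', u, v}, B, ?_, hB4, ?_⟩
  · rw [card_insert_of_notMem (by simp [hne, hux.1.symm, hvx.1.symm]),
      card_insert_of_notMem (by simp [hux.2.symm, hvx.2.symm]),
      card_insert_of_notMem (by simp [huv]), card_singleton]
  · intro w hw y hy
    have hyS : y ∈ S \ (N u ∪ N v) := hBsub hy
    rw [Finset.mem_sdiff] at hyS
    have hyS1 := Finset.mem_compl.mp hyS.1
    have hyS2 := hyS.2
    simp only [mem_union] at hyS1 hyS2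
    push_neg at hyS1 hyS2
    have hmem : ∀ w : Fin 8, y ∉ N w → (w, y) ∈ bipCompl 8 16 G := by
      intro w hwn
      simp only [bipCompl, Finset.mem_sdiff, Finset.mem_univ, true_and]
      intro hG
      exact hwn (by simp [hN, nbhd, hG])
    simp only [mem_insert, mem_singleton] at hw
    rcases hw with rfl | rfl | rfl | rfl
    · exact hmem _ hyS1.1
    · exact hmem _ hyS1.2
    · exact hmem _ hyS2.1
    · exact hmem _ hyS2.2
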